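/- Let α > 0, let θ_1, …, θ_L be i.i.d. real random variables uniformly distributed on [−α, α], let h_1, …, h_L be fixed complex numbers, let I be a finite index set with fixed complex numbers h̃_{i,l} for i ∈ I and l = 1, …, L, and let σ² > 0. Then E[|Σ_l e^{iθ_l} h_l|²] / ( Σ_{i∈I} E[|Σ_l e^{iθ_l} h̃_{i,l}|²] + σ² ) = ( ν̃|Σ_l h_l|² + (1−ν̃)Σ_l |h_l|² ) / ( Σ_{i∈I} ( ν̃|Σ_l h̃_{i,l}|² + (1−ν̃)Σ_l |h̃_{i,l}|² ) + σ² ), where ν̃ = (sin(α)/α)². -/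

import Mathlib

open MeasureTheory Set ProbabilityTheory

/-- The uniform probability measure on the interval `[-a, a]`. -/
noncomputable def uniformIcc (a : ℝ) : Measure ℝ :=
  (volume (Icc (-a) a))⁻¹ • volume.restrict (Icc (-a) a)

lemma intA (α : ℝ) (hα : 0 < α) :
    ∫ x, Complex.exp ((x : ℂ) * Complex.I) ∂(uniformIcc α) = ((Real.sin α / α : ℝ) : ℂ) := by
  have h2 : (0:ℝ) < 2 * α := by linarith
  rw [uniformIcc, integral_smul_measure]
  rw [Real.volume_Icc]
  have : α - (-α) = 2 * α := by ring
  rw [this, ← ENNReal.ofReal_inv_of_pos h2, ENNReal.toReal_ofReal (by positivity)]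
  rw [MeasureTheory.integral_Icc_eq_integral_Ioc,
    ← intervalIntegral.integral_of_le (by linarith : -α ≤ α)]
  have : ∀ x : ℝ, Complex.exp ((x:ℂ) * Complex.I) = Complex.exp (Complex.I * (x:ℂ)) := by
    intro x; rw [mul_comm]
  simp only [this]
  rw [integral_exp_mul_complex Complex.I_ne_zero]
  have hsin : Complex.exp (Complex.I * (α:ℂ)) - Complex.exp (Complex.I * (-α:ℂ)) =
      2 * Complex.sin (α:ℂ) * Complex.I := by
    rw [Complex.sin]
    push_cast
    rw [mul_comm Complex.I (α:ℂ)]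
    field_simp
    ring_nf
    rw [Complex.I_sq]
    ring
  push_cast
  rw [hsin]
  rw [Complex.real_smul]
  push_cast
  have hαc : (α:ℂ) ≠ 0 := by exact_mod_cast hα.ne'
  field_simp

lemma key {Ω : Type*} [MeasurableSpace Ω] (μ : Measure Ω) [IsProbabilityMeasure μ]
    (α : ℝ) (hα : 0 < α) (L : ℕ) (θ : Fin L → Ω → ℝ)
    (hθ : ∀ l, AEMeasurable (θ l) μ)
    (hindep : iIndepFun θ μ)
    (hmap : ∀ l, μ.map (θ l) = uniformIcc α)
    (g : Fin L → ℂ) :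
    (∫ ω, ‖∑ l, Complex.exp ((θ l ω : ℂ) * Complex.I) * g l‖ ^ 2 ∂μ)
      = (Real.sin α / α) ^ 2 * ‖∑ l, g l‖ ^ 2
          + (1 - (Real.sin α / α) ^ 2) * ∑ l, ‖g l‖ ^ 2 := by
  classical
  set c : ℝ := Real.sin α / α with hc
  set f : Fin L → Ω → ℂ := fun l ω => Complex.exp ((θ l ω : ℂ) * Complex.I) with hf
  -- continuity of the outer map
  have hcont : Continuous (fun x : ℝ => Complex.exp ((x : ℂ) * Complex.I)) :=
    (Complex.continuous_ofReal.mul continuous_const).cexp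
  have hmeas : ∀ l, AEMeasurable (f l) μ := fun l =>
    (hcont.measurable.comp_aemeasurable (hθ l))
  have hnorm : ∀ l ω, ‖f l ω‖ = 1 := by
    intro l ω
    simp [hf, Complex.norm_exp]
  -- expectation of one exponential
  have hE : ∀ l, ∫ ω, f l ω ∂μ = (c : ℂ) := by
    intro l
    rw [hf]
    calc ∫ ω, Complex.exp ((θ l ω : ℂ) * Complex.I) ∂μ
        = ∫ x, Complex.exp ((x : ℂ) * Complex.I) ∂(μ.map (θ l)) := by
          rw [integral_map (hθ l) (by rw [hmap l]; exact hcont.aestronglyMeasurable)]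
      _ = (c : ℂ) := by rw [hmap l]; exact intA α hα
  have hEconj : ∀ l, ∫ ω, (starRingEnd ℂ) (f l ω) ∂μ = (c : ℂ) := by
    intro l
    rw [integral_conj, hE l]
    simp
  -- cross moments
  have hJ : ∀ l m : Fin L, ∫ ω, f l ω * (starRingEnd ℂ) (f m ω) ∂μ
      = if l = m then 1 else ((c : ℂ))^2 := by
    intro l m
    by_cases hlm : l = m
    · subst hlm
      simp only [if_pos rfl]
      have : ∀ ω, f l ω * (starRingEnd ℂ) (f l ω) = 1 := by
        intro ω
        rw [Complex.mul_conj']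
        norm_cast
        rw [hnorm l ω]; norm_num
      simp only [this]
      simp
    · rw [if_neg hlm]
      have hpair : μ.map (fun ω => (θ l ω, θ m ω)) = (μ.map (θ l)).prod (μ.map (θ m)) :=
        ((indepFun_iff_map_prod_eq_prod_map_map (hθ l) (hθ m)).mp (hindep.indepFun hlm))
      have hmp : AEMeasurable (fun ω => (θ l ω, θ m ω)) μ := (hθ l).prodMk (hθ m)
      have hsm : AEStronglyMeasurable
          (fun p : ℝ × ℝ => Complex.exp ((p.1 : ℂ) * Complex.I)
            * (starRingEnd ℂ) (Complex.exp ((p.2 : ℂ) * Complex.I)))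
          (μ.map (fun ω => (θ l ω, θ m ω))) := by
        exact ((hcont.comp continuous_fst).mul
          (Complex.continuous_conj.comp (hcont.comp continuous_snd))).aestronglyMeasurable
      calc ∫ ω, f l ω * (starRingEnd ℂ) (f m ω) ∂μ
          = ∫ p : ℝ × ℝ, Complex.exp ((p.1 : ℂ) * Complex.I)
              * (starRingEnd ℂ) (Complex.exp ((p.2 : ℂ) * Complex.I))
              ∂(μ.map (fun ω => (θ l ω, θ m ω))) := (integral_map hmp hsm).symm
        _ = (∫ x, Complex.exp ((x : ℂ) * Complex.I) ∂(μ.map (θ l)))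
              * ∫ x, (starRingEnd ℂ) (Complex.exp ((x : ℂ) * Complex.I)) ∂(μ.map (θ m)) := by
            rw [hpair]
            exact integral_prod_mul (fun x : ℝ => Complex.exp ((x : ℂ) * Complex.I))
              (fun x : ℝ => (starRingEnd ℂ) (Complex.exp ((x : ℂ) * Complex.I)))
        _ = ((c : ℂ))^2 := by
            rw [hmap l, hmap m, integral_conj, intA α hα, Complex.conj_ofReal, sq]
  -- integrability of each product term
  set T : Fin L → Fin L → Ω → ℂ :=
    fun l m ω => (g l * (starRingEnd ℂ) (g m)) * (f l ω * (starRingEnd ℂ) (f m ω)) with hT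
  have hTmeas : ∀ l m, AEStronglyMeasurable (T l m) μ := by
    intro l m
    exact (aestronglyMeasurable_const.mul
      (((hmeas l).aestronglyMeasurable).mul
        (Complex.continuous_conj.comp_aestronglyMeasurable (hmeas m).aestronglyMeasurable)))
  have hTint : ∀ l m, Integrable (T l m) μ := by
    intro l m
    refine (integrable_const (‖g l‖ * ‖g m‖)).mono' (hTmeas l m) ?_
    filter_upwards with ω
    simp only [hT, norm_mul, RCLike.norm_conj, hnorm]
    norm_num
  -- pointwise expansion
  have hpt : ∀ ω, (‖∑ l, f l ω * g l‖ : ℝ) ^ 2 = (∑ l, ∑ m, T l m ω).re := by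
    intro ω
    have : (∑ l, f l ω * g l) * (starRingEnd ℂ) (∑ m, f m ω * g m)
        = ∑ l, ∑ m, T l m ω := by
      rw [map_sum, Finset.sum_mul_sum]
      refine Finset.sum_congr rfl fun l _ => Finset.sum_congr rfl fun m _ => ?_
      simp only [hT, map_mul]
      ring
    rw [← this, Complex.mul_conj']
    norm_cast
  change ∫ ω, ‖∑ l, f l ω * g l‖ ^ 2 ∂μ = _
  simp only [hpt]
  simp only [← RCLike.re_to_complex]
  rw [integral_re (integrable_finset_sum _ (fun l _ => integrable_finset_sum _ (fun m _ => hTint l m)))]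
  rw [integral_finset_sum _ (fun l _ => integrable_finset_sum _ (fun m _ => hTint l m))]
  have hTval : ∀ l, ∫ ω, ∑ m, T l m ω ∂μ
      = ∑ m, (g l * (starRingEnd ℂ) (g m)) * (if l = m then 1 else ((c:ℂ))^2) := by
    intro l
    rw [integral_finset_sum _ (fun m _ => hTint l m)]
    refine Finset.sum_congr rfl fun m _ => ?_
    rw [hT]
    simp only
    rw [integral_const_mul, hJ l m]
  simp only [hTval]
  have hsum : (∑ l, ∑ m, (g l * (starRingEnd ℂ) (g m)) * (if l = m then 1 else ((c:ℂ))^2))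
      = (((c ^ 2 * ‖∑ l, g l‖ ^ 2 + (1 - c ^ 2) * ∑ l, ‖g l‖ ^ 2 : ℝ)) : ℂ) := by
    have step : ∀ l m : Fin L, (g l * (starRingEnd ℂ) (g m)) * (if l = m then 1 else ((c:ℂ))^2)
        = (g l * (starRingEnd ℂ) (g m)) * ((c:ℂ))^2
          + (if l = m then (g l * (starRingEnd ℂ) (g m)) * (1 - ((c:ℂ))^2) else 0) := by
      intro l m
      by_cases hlm : l = m
      · simp [hlm]; ring
      · simp [hlm]
    simp only [step, Finset.sum_add_distrib, Finset.sum_ite_eq, Finset.mem_univ, if_true]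
    have e1 : ∑ x : Fin L, ∑ y : Fin L, g x * (starRingEnd ℂ) (g y) * ((c:ℂ))^2
        = ((∑ x, g x) * (starRingEnd ℂ) (∑ y, g y)) * ((c:ℂ))^2 := by
      rw [map_sum, Finset.sum_mul_sum, Finset.sum_mul]
      exact Finset.sum_congr rfl fun x _ => (Finset.sum_mul _ _ _).symm
    rw [e1, Complex.mul_conj']
    simp only [Complex.mul_conj']
    push_cast
    ring_nf
    simp [Finset.sum_add_distrib, ← Finset.mul_sum]
    ring_nf
  rw [hsum]
  simp only [RCLike.re_to_complex, Complex.ofReal_re]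


/-- Closed form of the instantaneous downlink SINR under i.i.d. uniform phase
misalignments `θ_l ~ U[-α, α]`:
`E[|Σ_l e^{iθ_l} h_l|²] / (Σ_i E[|Σ_l e^{iθ_l} h̃_{i,l}|²] + σ²)` equals
`(ν̃ |Σ_l h_l|² + (1-ν̃) Σ_l |h_l|²) / (Σ_i (ν̃ |Σ_l h̃_{i,l}|² + (1-ν̃) Σ_l |h̃_{i,l}|²) + σ²)`
with `ν̃ = (sin α / α)²`. -/
theorem sinr_closed_form_instantaneous
    {Ω : Type*} [MeasurableSpace Ω] (μ : Measure Ω) [IsProbabilityMeasure μ]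
    (α : ℝ) (hα : 0 < α) (L : ℕ) (θ : Fin L → Ω → ℝ)
    (hθ : ∀ l, AEMeasurable (θ l) μ)
    (hindep : iIndepFun θ μ)
    (hmap : ∀ l, μ.map (θ l) = uniformIcc α)
    (h : Fin L → ℂ)
    {I : Type*} [Fintype I] (ht : I → Fin L → ℂ)
    (σ2 : ℝ) (hσ2 : 0 < σ2) :
    (∫ ω, ‖∑ l, Complex.exp ((θ l ω : ℂ) * Complex.I) * h l‖ ^ 2 ∂μ)
        / ((∑ i, ∫ ω, ‖∑ l, Complex.exp ((θ l ω : ℂ) * Complex.I) * ht i l‖ ^ 2 ∂μ) + σ2)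
      = ((Real.sin α / α) ^ 2 * ‖∑ l, h l‖ ^ 2
            + (1 - (Real.sin α / α) ^ 2) * ∑ l, ‖h l‖ ^ 2)
        / ((∑ i, ((Real.sin α / α) ^ 2 * ‖∑ l, ht i l‖ ^ 2
            + (1 - (Real.sin α / α) ^ 2) * ∑ l, ‖ht i l‖ ^ 2)) + σ2) := by
  rw [key μ α hα L θ hθ hindep hmap h]
  congr 2
  exact Finset.sum_congr rfl fun i _ => key μ α hα L θ hθ hindep hmap (ht i)
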